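/- Let I ⊆ ℝ be an open interval, let ζ, B, R : ℝ → ℝ be twice continuously differentiable on I with ζ(r) ≠ 0, B(r) > 0 and R(r) ≠ 0 for all r ∈ I, and suppose (ζ, B, R) satisfies the second-order form of the general diagonal isotropy ODE on I. Fix r₀ ∈ I and σ, ε ∈ ℝ, and define Z : I → ℝ by Z(r) = σ + ε ∫_{r₀}^{r} R(s)/(√(B(s))·ζ(s)²) ds. Then (ζ·Z, B, R) also satisfies the second-order form of the general diagonal isotropy ODE on I. -/

import Mathlib

/-- **General diagonal 2.**  If `(ζ, B, R)` satisfies the second-order form of the general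
diagonal pressure-isotropy ODE on an open interval, then so does `(ζ·Z, B, R)`, where
`Z(r) = σ + ε ∫ R/(√B ζ²)`. -/
theorem general_diagonal_two
    (a b : ℝ) (ζ B R : ℝ → ℝ)
    (hζ : ContDiffOn ℝ 2 ζ (Set.Ioo a b))
    (hB : ContDiffOn ℝ 2 B (Set.Ioo a b))
    (hR : ContDiffOn ℝ 2 R (Set.Ioo a b))
    (hζ0 : ∀ r ∈ Set.Ioo a b, ζ r ≠ 0)
    (hB0 : ∀ r ∈ Set.Ioo a b, 0 < B r)
    (hR0 : ∀ r ∈ Set.Ioo a b, R r ≠ 0)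
    (hODE : ∀ r ∈ Set.Ioo a b,
      2 * (R r) ^ 2 * B r * deriv (deriv ζ) r
        + ((R r) ^ 2 * deriv B r - 2 * B r * R r * deriv R r) * deriv ζ r
        + (2 * B r * (R r * deriv (deriv R) r - (deriv R r) ^ 2)
            + R r * deriv B r * deriv R r + 2) * ζ r = 0)
    (r₀ : ℝ) (hr₀ : r₀ ∈ Set.Ioo a b) (σ ε : ℝ) (Z : ℝ → ℝ)
    (hZ : ∀ r ∈ Set.Ioo a b,
      Z r = σ + ε * ∫ s in r₀..r, R s / (Real.sqrt (B s) * (ζ s) ^ 2)) :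
    ∀ r ∈ Set.Ioo a b,
      2 * (R r) ^ 2 * B r * deriv (deriv (fun x => ζ x * Z x)) r
        + ((R r) ^ 2 * deriv B r - 2 * B r * R r * deriv R r) * deriv (fun x => ζ x * Z x) r
        + (2 * B r * (R r * deriv (deriv R) r - (deriv R r) ^ 2)
            + R r * deriv B r * deriv R r + 2) * (ζ r * Z r) = 0 := by
  have hso : IsOpen (Set.Ioo a b) := isOpen_Ioo
  set f : ℝ → ℝ := fun x => R x / (Real.sqrt (B x) * ζ x ^ 2) with hfdef
  -- the integrand is continuous on the interval
  have hden : ∀ x ∈ Set.Ioo a b, Real.sqrt (B x) * ζ x ^ 2 ≠ 0 := by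
    intro x hx
    exact mul_ne_zero (ne_of_gt (Real.sqrt_pos.mpr (hB0 x hx))) (pow_ne_zero 2 (hζ0 x hx))
  have hfc : ContinuousOn f (Set.Ioo a b) := by
    exact ContinuousOn.div hR.continuousOn
      ((hB.continuousOn.sqrt).mul (hζ.continuousOn.pow 2)) hden
  -- derivatives of C² functions on the open interval
  have key : ∀ (F : ℝ → ℝ), ContDiffOn ℝ 2 F (Set.Ioo a b) → ∀ x ∈ Set.Ioo a b,
      HasDerivAt F (deriv F x) x ∧ HasDerivAt (deriv F) (deriv (deriv F) x) x := by
    intro F hF x hx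
    have h1 : DifferentiableAt ℝ F x :=
      (hF.contDiffAt (hso.mem_nhds hx)).differentiableAt (by norm_num)
    have h2 : ContDiffOn ℝ 1 (deriv F) (Set.Ioo a b) :=
      hF.deriv_of_isOpen hso (by norm_num)
    have h3 : DifferentiableAt ℝ (deriv F) x :=
      (h2.contDiffAt (hso.mem_nhds hx)).differentiableAt one_ne_zero
    exact ⟨h1.hasDerivAt, h3.hasDerivAt⟩
  -- Z has derivative ε * f x at each x ∈ Ioo a b
  have hZd : ∀ x ∈ Set.Ioo a b, HasDerivAt Z (ε * f x) x := by
    intro x hx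
    have hsub : Set.uIcc r₀ x ⊆ Set.Ioo a b := Set.ordConnected_Ioo.uIcc_subset hr₀ hx
    have hint : IntervalIntegrable f MeasureTheory.volume r₀ x :=
      (hfc.mono hsub).intervalIntegrable
    have hmeas := ContinuousOn.stronglyMeasurableAtFilter
      (μ := MeasureTheory.volume) hso hfc x hx
    have hcont : ContinuousAt f x := hfc.continuousAt (hso.mem_nhds hx)
    have hF : HasDerivAt (fun y => ∫ s in r₀..y, f s) (f x) x :=
      intervalIntegral.integral_hasDerivAt_right hint hmeas hcont
    have hF2 : HasDerivAt (fun y => σ + ε * ∫ s in r₀..y, f s) (ε * f x) x := by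
      simpa using (hF.const_mul ε).const_add σ
    apply hF2.congr_of_eventuallyEq
    filter_upwards [hso.mem_nhds hx] with y hy
    exact hZ y hy
  intro r hr
  obtain ⟨hζd, hζd2⟩ := key ζ hζ r hr
  obtain ⟨hBd, _⟩ := key B hB r hr
  obtain ⟨hRd, _⟩ := key R hR r hr
  have hBne : B r ≠ 0 := (hB0 r hr).ne'
  have hsB : Real.sqrt (B r) ≠ 0 := ne_of_gt (Real.sqrt_pos.mpr (hB0 r hr))
  have hsq : Real.sqrt (B r) ^ 2 = B r := Real.sq_sqrt (hB0 r hr).le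
  have hζr : ζ r ≠ 0 := hζ0 r hr
  set sb := Real.sqrt (B r) with hsb
  -- derivative of f at r
  have hsqrtd : HasDerivAt (fun x => Real.sqrt (B x)) (deriv B r / (2 * Real.sqrt (B r))) r :=
    hBd.sqrt hBne
  have hdend : HasDerivAt (fun x => Real.sqrt (B x) * ζ x ^ 2)
      (deriv B r / (2 * Real.sqrt (B r)) * ζ r ^ 2
        + Real.sqrt (B r) * (2 * ζ r ^ 1 * deriv ζ r)) r := by
    simpa using hsqrtd.fun_mul (hζd.fun_pow 2)
  have hfd : HasDerivAt f
      ((deriv R r * (Real.sqrt (B r) * ζ r ^ 2)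
        - R r * (deriv B r / (2 * Real.sqrt (B r)) * ζ r ^ 2
          + Real.sqrt (B r) * (2 * ζ r ^ 1 * deriv ζ r)))
        / (Real.sqrt (B r) * ζ r ^ 2) ^ 2) r :=
    hRd.div hdend (hden r hr)
  -- first derivative of ζ * Z on the interval
  have hprod : ∀ x ∈ Set.Ioo a b,
      deriv (fun y => ζ y * Z y) x = deriv ζ x * Z x + ζ x * (ε * f x) := by
    intro x hx
    exact (((key ζ hζ x hx).1).mul (hZd x hx)).deriv
  have hd1 : deriv (fun y => ζ y * Z y) r = deriv ζ r * Z r + ζ r * (ε * f r) :=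
    hprod r hr
  -- second derivative of ζ * Z at r
  have hPd : HasDerivAt (fun x => deriv ζ x * Z x + ζ x * (ε * f x))
      (deriv (deriv ζ) r * Z r + deriv ζ r * (ε * f r)
        + (deriv ζ r * (ε * f r) + ζ r * (ε * ((deriv R r * (Real.sqrt (B r) * ζ r ^ 2)
          - R r * (deriv B r / (2 * Real.sqrt (B r)) * ζ r ^ 2
            + Real.sqrt (B r) * (2 * ζ r ^ 1 * deriv ζ r)))
          / (Real.sqrt (B r) * ζ r ^ 2) ^ 2)))) r :=
    (hζd2.mul (hZd r hr)).add (hζd.mul (hfd.const_mul ε))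
  have hd2 : deriv (deriv (fun y => ζ y * Z y)) r
      = deriv (deriv ζ) r * Z r + deriv ζ r * (ε * f r)
        + (deriv ζ r * (ε * f r) + ζ r * (ε * ((deriv R r * (Real.sqrt (B r) * ζ r ^ 2)
          - R r * (deriv B r / (2 * Real.sqrt (B r)) * ζ r ^ 2
            + Real.sqrt (B r) * (2 * ζ r ^ 1 * deriv ζ r)))
          / (Real.sqrt (B r) * ζ r ^ 2) ^ 2))) := by
    have heq : deriv (fun y => ζ y * Z y)
        =ᶠ[nhds r] fun x => deriv ζ x * Z x + ζ x * (ε * f x) := by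
      filter_upwards [hso.mem_nhds hr] with x hx
      exact hprod x hx
    rw [Filter.EventuallyEq.deriv_eq heq]
    exact hPd.deriv
  have hODEr := hODE r hr
  have hfr : f r = R r / (Real.sqrt (B r) * ζ r ^ 2) := rfl
  rw [hd1, hd2, hfr]
  rw [← hsb]
  rw [← hsq] at hODEr ⊢
  -- the extra terms cancel
  have hbr : 2 * (R r) ^ 2 * sb ^ 2
      * (2 * deriv ζ r * (R r / (sb * ζ r ^ 2))
        + ζ r * ((deriv R r * (sb * ζ r ^ 2)
          - R r * (deriv B r / (2 * sb) * ζ r ^ 2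
            + sb * (2 * ζ r ^ 1 * deriv ζ r)))
          / (sb * ζ r ^ 2) ^ 2))
      + ((R r) ^ 2 * deriv B r - 2 * sb ^ 2 * R r * deriv R r)
        * (ζ r * (R r / (sb * ζ r ^ 2))) = 0 := by
    field_simp
    ring
  linear_combination Z r * hODEr + ε * hbr
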